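/- Let N ∈ ℕ, let B^N be the (N+1)×(N+1) real matrix with entries b_{m,n} = √T·√((n+1)/2) when m = n+1, b_{m,n} = √T·√(n/2) when m = n−1, and 0 otherwise, and let M be the (N+1)×(N+1) matrix whose entries are M_{m,n} = (A^N · B^N)_{m,n} + √(T(N+1)/2) · a_{m, N+1} when n = N, and M_{m,n} = (A^N · B^N)_{m,n} otherwise. Then M is symmetric: M = Mᵀ. (This expresses that the first modified advection matrix B̄^N = B^N + (A^N)^{−1}·A₁₂^N·B₂₁^N is symmetric with respect to the truncated Gram matrix.) -/

import Mathlib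

open Real MeasureTheory Matrix Filter

/-- Physicists' Hermite polynomials: H_0 = 1, H_1 = 2x, H_{n+1} = 2x H_n - 2n H_{n-1}. -/
noncomputable def hermiteH : ℕ → ℝ → ℝ
  | 0, _ => 1
  | 1, x => 2 * x
  | (n + 2), x => 2 * x * hermiteH (n + 1) x - 2 * (n + 1) * hermiteH n x

/-- Asymmetric Hermite basis function ψ_m. -/
noncomputable def psi (T : ℝ) (m : ℕ) (v : ℝ) : ℝ :=
  Real.exp (-v ^ 2 / T) * T ^ (-(1 : ℝ) / 2) *
    ((2 : ℝ) ^ m * (Nat.factorial m : ℝ) * Real.sqrt π) ^ (-(1 : ℝ) / 2) *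
    hermiteH m (v / Real.sqrt T)

/-- Gram coefficient a_{m,n} = ∫ ψ_m ψ_n. -/
noncomputable def gramA (T : ℝ) (m n : ℕ) : ℝ := ∫ v : ℝ, psi T m v * psi T n v

/-- Truncated Gram matrix A^N. -/
noncomputable def Amat (T : ℝ) (N : ℕ) : Matrix (Fin (N + 1)) (Fin (N + 1)) ℝ :=
  fun m n => gramA T (m : ℕ) (n : ℕ)

/-- Truncated advection matrix B^N. -/
noncomputable def Bmat (T : ℝ) (N : ℕ) : Matrix (Fin (N + 1)) (Fin (N + 1)) ℝ :=
  fun m n =>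
    if (m : ℕ) = (n : ℕ) + 1 then Real.sqrt T * Real.sqrt (((n : ℝ) + 1) / 2)
    else if (m : ℕ) + 1 = (n : ℕ) then Real.sqrt T * Real.sqrt ((n : ℝ) / 2)
    else 0

lemma hermite_rec (n : ℕ) (x : ℝ) :
    hermiteH (n + 1) x = 2 * x * hermiteH n x - 2 * n * hermiteH (n - 1) x := by
  cases n with
  | zero => simp [hermiteH]
  | succ k => rw [show k + 1 + 1 = k + 2 from rfl, hermiteH]; push_cast; simp

lemma hermite_poly (m : ℕ) : ∃ Q : Polynomial ℝ, ∀ x, hermiteH m x = Q.eval x := by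
  induction m using Nat.strong_induction_on with
  | _ m ih =>
    match m with
    | 0 => exact ⟨1, by simp [hermiteH]⟩
    | 1 => exact ⟨2 * Polynomial.X, by simp [hermiteH]⟩
    | (k + 2) =>
      obtain ⟨Q1, hQ1⟩ := ih (k + 1) (by omega)
      obtain ⟨Q0, hQ0⟩ := ih k (by omega)
      refine ⟨2 * Polynomial.X * Q1 - Polynomial.C (2 * (k + 1 : ℝ)) * Q0, fun x => ?_⟩
      rw [hermiteH]
      simp [hQ1, hQ0]

lemma integ_pow {b : ℝ} (hb : 0 < b) (k : ℕ) :
    Integrable (fun v : ℝ => v ^ k * Real.exp (-b * v ^ 2)) := by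
  have h := integrable_rpow_mul_exp_neg_mul_sq hb (s := (k : ℝ))
    (lt_of_lt_of_le neg_one_lt_zero (Nat.cast_nonneg k))
  simpa [Real.rpow_natCast] using h

lemma integ_poly {b : ℝ} (hb : 0 < b) (R : Polynomial ℝ) :
    Integrable (fun v : ℝ => R.eval v * Real.exp (-b * v ^ 2)) := by
  have : ∀ v : ℝ, R.eval v * Real.exp (-b * v ^ 2) =
      ∑ k ∈ Finset.range (R.natDegree + 1),
        R.coeff k * (v ^ k * Real.exp (-b * v ^ 2)) := by
    intro v
    rw [Polynomial.eval_eq_sum_range, Finset.sum_mul]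
    simp [mul_assoc]
  simp_rw [this]
  exact integrable_finset_sum _ (fun k _ => (integ_pow hb k).const_mul _)

lemma rinv {y : ℝ} (hy : 0 < y) : y ^ (-(1 : ℝ) / 2) = (Real.sqrt y)⁻¹ := by
  rw [neg_div, Real.rpow_neg hy.le, Real.sqrt_eq_rpow]

lemma upos (m : ℕ) : (0 : ℝ) < (2 : ℝ) ^ m * (Nat.factorial m : ℝ) * Real.sqrt π := by
  have := Real.sqrt_pos.mpr Real.pi_pos
  have := Nat.factorial_pos m
  positivity

lemma usucc (m : ℕ) : (2 : ℝ) ^ (m + 1) * (Nat.factorial (m + 1) : ℝ) * Real.sqrt π =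
    (2 * ((m : ℝ) + 1)) * ((2 : ℝ) ^ m * (Nat.factorial m : ℝ) * Real.sqrt π) := by
  rw [pow_succ, Nat.factorial_succ]
  push_cast
  ring

lemma constA (n : ℕ) :
    Real.sqrt (((n : ℝ) + 1) / 2) *
      (Real.sqrt ((2 : ℝ) ^ (n + 1) * (Nat.factorial (n + 1) : ℝ) * Real.sqrt π))⁻¹ =
    (1 / 2) * (Real.sqrt ((2 : ℝ) ^ n * (Nat.factorial n : ℝ) * Real.sqrt π))⁻¹ := by
  rw [usucc n, Real.sqrt_mul (by positivity), mul_inv, ← mul_assoc]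
  congr 1
  rw [← div_eq_mul_inv, ← Real.sqrt_div (by positivity),
    show ((n : ℝ) + 1) / 2 / (2 * ((n : ℝ) + 1)) = 1 / 4 by
      have h : ((n : ℝ) + 1) ≠ 0 := by positivity
      field_simp
      ring,
    show (1 : ℝ) / 4 = (1 / 2) ^ 2 by norm_num, Real.sqrt_sq (by norm_num)]

lemma constB (n : ℕ) :
    Real.sqrt ((n : ℝ) / 2) *
      (Real.sqrt ((2 : ℝ) ^ (n - 1) * (Nat.factorial (n - 1) : ℝ) * Real.sqrt π))⁻¹ =
    (n : ℝ) * (Real.sqrt ((2 : ℝ) ^ n * (Nat.factorial n : ℝ) * Real.sqrt π))⁻¹ := by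
  cases n with
  | zero => simp
  | succ k =>
    have h1 : (k + 1 : ℕ) - 1 = k := rfl
    have key : ((k : ℝ) + 1) * (Real.sqrt (2 * ((k : ℝ) + 1)))⁻¹ =
        Real.sqrt (((k : ℝ) + 1) / 2) := by
      have h2 : ((k : ℝ) + 1) * (Real.sqrt (2 * ((k : ℝ) + 1)))⁻¹ =
          Real.sqrt (((k : ℝ) + 1) ^ 2) * (Real.sqrt (2 * ((k : ℝ) + 1)))⁻¹ := by
        rw [Real.sqrt_sq (by positivity)]
      rw [h2, ← div_eq_mul_inv, ← Real.sqrt_div (by positivity)]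
      congr 1
      have h3 : (2 : ℝ) * ((k : ℝ) + 1) ≠ 0 := by positivity
      field_simp
    rw [h1, usucc k, Real.sqrt_mul (show (0:ℝ) ≤ 2 * ((k : ℝ) + 1) by positivity)
      ((2 : ℝ) ^ k * (Nat.factorial k : ℝ) * Real.sqrt π), mul_inv]
    push_cast
    linear_combination (-(Real.sqrt ((2 : ℝ) ^ k * (Nat.factorial k : ℝ) * Real.sqrt π))⁻¹) * key

lemma psi_rec (T : ℝ) (n : ℕ) (v : ℝ) :
    Real.sqrt (((n : ℝ) + 1) / 2) * psi T (n + 1) v +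
      Real.sqrt ((n : ℝ) / 2) * psi T (n - 1) v = (v / Real.sqrt T) * psi T n v := by
  simp only [psi]
  rw [rinv (upos (n + 1)), rinv (upos (n - 1)), rinv (upos n), hermite_rec n (v / Real.sqrt T)]
  have hA := constA n
  have hB := constB n
  set E := Real.exp (-v ^ 2 / T) * T ^ (-(1 : ℝ) / 2) with hE
  linear_combination
    (E * (2 * (v / Real.sqrt T) * hermiteH n (v / Real.sqrt T) -
      2 * (n : ℝ) * hermiteH (n - 1) (v / Real.sqrt T))) * hA +
    (E * hermiteH (n - 1) (v / Real.sqrt T)) * hB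

lemma psi_mul_integrable {T : ℝ} (hT : 0 < T) (m n : ℕ) :
    Integrable (fun v : ℝ => psi T m v * psi T n v) := by
  obtain ⟨Qm, hQm⟩ := hermite_poly m
  obtain ⟨Qn, hQn⟩ := hermite_poly n
  set R : Polynomial ℝ := (Qm * Qn).comp (Polynomial.C (Real.sqrt T)⁻¹ * Polynomial.X) with hR
  have hRv : ∀ v : ℝ, R.eval v = hermiteH m (v / Real.sqrt T) * hermiteH n (v / Real.sqrt T) := by
    intro v
    rw [hR]
    simp [Polynomial.eval_comp, hQm, hQn, div_eq_inv_mul]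
  have hexp : ∀ v : ℝ, Real.exp (-(2 / T) * v ^ 2) =
      Real.exp (-v ^ 2 / T) * Real.exp (-v ^ 2 / T) := by
    intro v
    rw [← Real.exp_add]
    congr 1
    field_simp
    ring
  have key : ∀ v : ℝ, psi T m v * psi T n v =
      (T ^ (-(1 : ℝ) / 2) * ((2 : ℝ) ^ m * (Nat.factorial m : ℝ) * Real.sqrt π) ^ (-(1 : ℝ) / 2) *
        (T ^ (-(1 : ℝ) / 2) * ((2 : ℝ) ^ n * (Nat.factorial n : ℝ) * Real.sqrt π) ^ (-(1 : ℝ) / 2))) *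
      (R.eval v * Real.exp (-(2 / T) * v ^ 2)) := by
    intro v
    rw [hexp v, hRv v]
    simp only [psi]
    ring
  simp_rw [key]
  exact (integ_poly (by positivity) R).const_mul _

lemma gram_comm (T : ℝ) (m n : ℕ) : gramA T m n = gramA T n m := by
  unfold gramA
  simp_rw [mul_comm]

lemma W_sym {T : ℝ} (hT : 0 < T) (m n : ℕ) :
    Real.sqrt (((n : ℝ) + 1) / 2) * gramA T m (n + 1) +
      Real.sqrt ((n : ℝ) / 2) * gramA T m (n - 1) =
    Real.sqrt (((m : ℝ) + 1) / 2) * gramA T n (m + 1) +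
      Real.sqrt ((m : ℝ) / 2) * gramA T n (m - 1) := by
  have hW : ∀ p q : ℕ, Real.sqrt (((q : ℝ) + 1) / 2) * gramA T p (q + 1) +
      Real.sqrt ((q : ℝ) / 2) * gramA T p (q - 1) =
      ∫ v : ℝ, (v / Real.sqrt T) * (psi T p v * psi T q v) := by
    intro p q
    unfold gramA
    rw [← integral_const_mul, ← integral_const_mul,
      ← integral_add ((psi_mul_integrable hT p (q + 1)).const_mul _)
        ((psi_mul_integrable hT p (q - 1)).const_mul _)]
    congr 1
    funext v
    linear_combination (psi T p v) * (psi_rec T q v)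
  rw [hW m n, hW n m]
  congr 1
  funext v
  ring

lemma sum_ind {N : ℕ} (c : ℕ) (C : ℝ) :
    (∑ k : Fin (N + 1), if (k : ℕ) = c then C else 0) = if c ≤ N then C else 0 := by
  rcases le_or_gt c N with h | h
  · rw [if_pos h, Finset.sum_eq_single (⟨c, by omega⟩ : Fin (N + 1))]
    · simp
    · intro b _ hb
      rw [if_neg]
      intro hc
      exact hb (by ext; simpa using hc)
    · simp
  · rw [if_neg (by omega)]
    apply Finset.sum_eq_zero
    intro k _
    rw [if_neg (by omega)]

lemma sum_ind2 {N : ℕ} (c : ℕ) (C : ℝ) :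
    (∑ k : Fin (N + 1), if (k : ℕ) + 1 = c then C else 0) =
      if 1 ≤ c ∧ c ≤ N + 1 then C else 0 := by
  rcases Decidable.em (1 ≤ c ∧ c ≤ N + 1) with h | h
  · rw [if_pos h, Finset.sum_eq_single (⟨c - 1, by omega⟩ : Fin (N + 1))]
    · rw [if_pos (by simp; omega)]
    · intro b _ hb
      rw [if_neg]
      intro hc
      exact hb (by ext; simp; omega)
    · simp
  · rw [if_neg h]
    apply Finset.sum_eq_zero
    intro k _
    rw [if_neg (by have := k.isLt; omega)]

lemma AB_apply (T : ℝ) (N : ℕ) (m n : Fin (N + 1)) :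
    (Amat T N * Bmat T N) m n =
      (if (n : ℕ) + 1 ≤ N then
        Real.sqrt T * Real.sqrt (((n : ℝ) + 1) / 2) * gramA T (m : ℕ) ((n : ℕ) + 1) else 0) +
      (if 1 ≤ (n : ℕ) then
        Real.sqrt T * Real.sqrt ((n : ℝ) / 2) * gramA T (m : ℕ) ((n : ℕ) - 1) else 0) := by
  rw [Matrix.mul_apply]
  have hterm : ∀ k : Fin (N + 1), Amat T N m k * Bmat T N k n =
      (if (k : ℕ) = (n : ℕ) + 1 then
        Real.sqrt T * Real.sqrt (((n : ℝ) + 1) / 2) * gramA T (m : ℕ) ((n : ℕ) + 1) else 0) +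
      (if (k : ℕ) + 1 = (n : ℕ) then
        Real.sqrt T * Real.sqrt ((n : ℝ) / 2) * gramA T (m : ℕ) ((n : ℕ) - 1) else 0) := by
    intro k
    unfold Amat Bmat
    split_ifs with h1 h2 <;> try omega
    · rw [h1]; ring
    · rw [show (k : ℕ) = (n : ℕ) - 1 by omega]; ring
    · ring
  rw [Finset.sum_congr rfl (fun k _ => hterm k), Finset.sum_add_distrib, sum_ind, sum_ind2]
  congr 1
  rcases le_or_gt 1 (n : ℕ) with h | h
  · rw [if_pos ⟨h, by have := n.isLt; omega⟩, if_pos h]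
  · rw [if_neg (by omega), if_neg (by omega)]

theorem modified_advection_symmetric (T : ℝ) (hT : 0 < T) (N : ℕ)
    (M : Matrix (Fin (N + 1)) (Fin (N + 1)) ℝ)
    (hM : ∀ m n : Fin (N + 1),
      M m n = if (n : ℕ) = N then
          (Amat T N * Bmat T N) m n +
            Real.sqrt (T * ((N : ℝ) + 1) / 2) * gramA T (m : ℕ) (N + 1)
        else (Amat T N * Bmat T N) m n) :
    M = Mᵀ := by
  have hMval : ∀ m n : Fin (N + 1), M m n =
      Real.sqrt T * Real.sqrt (((n : ℝ) + 1) / 2) * gramA T (m : ℕ) ((n : ℕ) + 1) +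
      Real.sqrt T * Real.sqrt ((n : ℝ) / 2) * gramA T (m : ℕ) ((n : ℕ) - 1) := by
    intro m n
    have hsecond : (if 1 ≤ (n : ℕ) then
        Real.sqrt T * Real.sqrt ((n : ℝ) / 2) * gramA T (m : ℕ) ((n : ℕ) - 1) else 0) =
        Real.sqrt T * Real.sqrt ((n : ℝ) / 2) * gramA T (m : ℕ) ((n : ℕ) - 1) := by
      rcases le_or_gt 1 (n : ℕ) with h | h
      · rw [if_pos h]
      · have h0 : (n : ℕ) = 0 := by omega
        rw [if_neg (by omega), h0]
        simp
    rw [hM m n]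
    split_ifs with h
    · rw [AB_apply, if_neg (by omega), hsecond, h]
      have : Real.sqrt (T * ((N : ℝ) + 1) / 2) =
          Real.sqrt T * Real.sqrt (((N : ℝ) + 1) / 2) := by
        rw [show T * ((N : ℝ) + 1) / 2 = T * (((N : ℝ) + 1) / 2) by ring,
          Real.sqrt_mul hT.le]
      rw [this]
      ring
    · rw [AB_apply, if_pos (by have := n.isLt; omega), hsecond]
  apply Matrix.ext
  intro m n
  rw [Matrix.transpose_apply, hMval m n, hMval n m]
  linear_combination Real.sqrt T * (W_sym hT (m : ℕ) (n : ℕ))
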